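/- Let n ≥ 1 and let s = (s_1, ..., s_n) be a sequence of positive integers. If s is graphic and s_1 + s_2 + ... + s_n ≥ 2(n-1), then s is connected and graphic, i.e., s is the degree sequence of some connected simple graph on n vertices. -/

import Mathlib

open SimpleGraph

/-- A sequence `s` of length `n` is graphic if it is the degree sequence of a
finite simple graph on `n` vertices. -/
def Graphic (n : ℕ) (s : Fin n → ℕ) : Prop :=
  ∃ G : SimpleGraph (Fin n), ∃ _ : DecidableRel G.Adj, ∀ i, G.degree i = s i

/-- A sequence `s` is connected and graphic if it is the degree sequence of a
connected finite simple graph on `n` vertices. -/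
def ConnectedGraphic (n : ℕ) (s : Fin n → ℕ) : Prop :=
  ∃ G : SimpleGraph (Fin n), ∃ _ : DecidableRel G.Adj,
    G.Connected ∧ ∀ i, G.degree i = s i

lemma aux_degree_eq_ncard {V : Type*} [Fintype V] (G : SimpleGraph V) [DecidableRel G.Adj]
    (v : V) : G.degree v = (G.neighborSet v).ncard := by
  rw [← card_neighborSet_eq_degree, ← Nat.card_coe_set_eq, Nat.card_eq_fintype_card]

/-- Transfer reachability along walks whose every edge can be crossed in `K`,
where the crossing condition may depend on reachability from a base point `a`. -/
lemma aux_reach_transfer {α : Type*} {H K : SimpleGraph α} {a : α}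
    (hadj : ∀ u v, H.Adj u v → H.Reachable a u → K.Reachable u v) :
    ∀ {x y : α}, H.Walk x y → H.Reachable a x → K.Reachable x y := by
  intro x y w
  induction w with
  | nil => exact fun _ => Reachable.refl _
  | cons h p ih => exact fun hx => (hadj _ _ h hx).trans (ih (hx.trans h.reachable))

lemma aux_reach_mono {α : Type*} {H K : SimpleGraph α}
    (hadj : ∀ u v, H.Adj u v → K.Reachable u v) {x y : α} (h : H.Reachable x y) :
    K.Reachable x y := by
  obtain ⟨w⟩ := h
  exact aux_reach_transfer (a := x) (fun u v hu _ => hadj u v hu) w (Reachable.refl x)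

/-- In an acyclic graph on a finite vertex type, the number of edges plus the
number of connected components is at most the number of vertices. -/
lemma aux_acyclic_card_bound {V : Type*} [Fintype V] :
    ∀ (m : ℕ) (G : SimpleGraph V), G.IsAcyclic →
      Nat.card G.edgeSet = m →
      m + Nat.card G.ConnectedComponent ≤ Fintype.card V := by
  intro m
  induction m with
  | zero =>
    intro G _ _
    have hsurj : Function.Surjective (G.connectedComponentMk) := fun C =>
      C.ind (fun v => ⟨v, rfl⟩)
    simpa using Nat.card_le_card_of_surjective _ hsurj
  | succ m ih =>
    intro G hG hm
    rw [Nat.card_coe_set_eq] at hm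
    have hne : G.edgeSet.Nonempty := Set.nonempty_of_ncard_ne_zero (by omega)
    obtain ⟨e, he⟩ := hne
    revert he
    induction e using Sym2.ind with
    | _ a b =>
    intro he
    have hab : G.Adj a b := he
    set G' := G.deleteEdges {s(a, b)} with hG'def
    have hle : G' ≤ G := deleteEdges_le _
    have hacy' : G'.IsAcyclic := fun v c hc => hG _ ((Walk.mapLe_isCycle hle).mpr hc)
    have hE' : Nat.card G'.edgeSet = m := by
      rw [Nat.card_coe_set_eq, hG'def, edgeSet_deleteEdges,
        Set.ncard_diff_singleton_of_mem he]
      omega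
    have hbridge : ¬ (G \ fromEdgeSet {s(a, b)}).Reachable a b :=
      ((isAcyclic_iff_forall_edge_isBridge.mp hG he) : _)
    have hnr : ¬ G'.Reachable a b := hbridge
    -- the natural map on connected components
    set f : G'.ConnectedComponent → G.ConnectedComponent :=
      ConnectedComponent.map (Hom.ofLE hle) with hfdef
    have hfsurj : Function.Surjective f := by
      intro C
      refine C.ind (fun v => ⟨G'.connectedComponentMk v, ?_⟩)
      simp [hfdef, ConnectedComponent.map_mk, Hom.ofLE_apply]
    have hfninj : ¬ Function.Injective f := by
      intro hinj
      have h1 : f (G'.connectedComponentMk a) = f (G'.connectedComponentMk b) := by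
        simp only [hfdef, ConnectedComponent.map_mk, Hom.ofLE_apply]
        exact ConnectedComponent.sound hab.reachable
      exact hnr (ConnectedComponent.exact (hinj h1))
    have hcc : Nat.card G.ConnectedComponent + 1 ≤ Nat.card G'.ConnectedComponent := by
      haveI : Finite G.ConnectedComponent := Quot.finite _
      haveI : Finite G'.ConnectedComponent := Quot.finite _
      haveI := Fintype.ofFinite G.ConnectedComponent
      haveI := Fintype.ofFinite G'.ConnectedComponent
      rw [Nat.card_eq_fintype_card, Nat.card_eq_fintype_card]
      exact Fintype.card_lt_of_surjective_not_injective f hfsurj hfninj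
    have := ih G' hacy' hE'
    omega

set_option maxHeartbeats 1000000 in
/-- The key degree-preserving swap. -/
lemma aux_swap {n : ℕ} (G : SimpleGraph (Fin n)) (a b c d : Fin n)
    (hab : G.Adj a b) (hcd : G.Adj c d) (hac : ¬ G.Reachable a c)
    (hreach : (G \ fromEdgeSet {s(a, b)}).Reachable a b) :
    ∃ G₂ : SimpleGraph (Fin n),
      (∀ v, (G₂.neighborSet v).ncard = (G.neighborSet v).ncard) ∧
      (∀ x y, G.Reachable x y → G₂.Reachable x y) ∧ G₂.Reachable a c := by
  classical
  have hrab : G.Reachable a b := hab.reachable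
  have hrcd : G.Reachable c d := hcd.reachable
  have hbc : ¬ G.Reachable b c := fun h => hac (hrab.trans h)
  have had : ¬ G.Reachable a d := fun h => hac (h.trans hrcd.symm)
  have hbd : ¬ G.Reachable b d := fun h => hac (hrab.trans (h.trans hrcd.symm))
  have hab' : a ≠ b := hab.ne
  have hcd' : c ≠ d := hcd.ne
  have hac' : a ≠ c := fun h => hac (h ▸ Reachable.refl a)
  have had' : a ≠ d := fun h => had (h ▸ Reachable.refl a)
  have hbc' : b ≠ c := fun h => hbc (h ▸ Reachable.refl b)
  have hbd' : b ≠ d := fun h => hbd (h ▸ Reachable.refl b)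
  have hnac : ¬ G.Adj a c := fun h => hac h.reachable
  have hnad : ¬ G.Adj a d := fun h => had h.reachable
  have hnbc : ¬ G.Adj b c := fun h => hbc h.reachable
  have hnbd : ¬ G.Adj b d := fun h => hbd h.reachable
  obtain ⟨G₂, hAdj⟩ : ∃ G₂ : SimpleGraph (Fin n), ∀ x y, G₂.Adj x y ↔
      ((G.Adj x y ∧ ¬(x = a ∧ y = b) ∧ ¬(x = b ∧ y = a) ∧ ¬(x = c ∧ y = d) ∧ ¬(x = d ∧ y = c))
        ∨ (x = a ∧ y = c) ∨ (x = c ∧ y = a) ∨ (x = b ∧ y = d) ∨ (x = d ∧ y = b)) := by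
    refine ⟨⟨fun x y =>
      ((G.Adj x y ∧ ¬(x = a ∧ y = b) ∧ ¬(x = b ∧ y = a) ∧ ¬(x = c ∧ y = d) ∧ ¬(x = d ∧ y = c))
        ∨ (x = a ∧ y = c) ∨ (x = c ∧ y = a) ∨ (x = b ∧ y = d) ∨ (x = d ∧ y = b)),
      ?_, ?_⟩, fun x y => Iff.rfl⟩
    · refine ⟨fun x y h => ?_⟩
      rcases h with ⟨h1, h2, h3, h4, h5⟩ | h | h | h | h
      · exact Or.inl ⟨h1.symm, by tauto, by tauto, by tauto, by tauto⟩
      all_goals tauto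
    · refine ⟨fun x h => ?_⟩
      rcases h with ⟨h1, _⟩ | h | h | h | h
      · exact G.loopless.irrefl x h1
      all_goals (obtain ⟨rfl, h⟩ := h; simp_all)
  -- reachability from a within the edge-deleted graph
  have hreach_ab : G₂.Reachable a b := by
    obtain ⟨w⟩ := hreach
    refine aux_reach_transfer (a := a) ?_ w (Reachable.refl a)
    intro u v huv hru
    have h1 : G.Adj u v ∧ ¬ (fromEdgeSet {s(a, b)} : SimpleGraph (Fin n)).Adj u v :=
      (sdiff_adj _ _ _ _).mp huv
    have hne : s(u, v) ≠ s(a, b) := by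
      intro h
      exact h1.2 ((fromEdgeSet_adj _).mpr ⟨by simp [h], h1.1.ne⟩)
    simp only [ne_eq, Sym2.eq_iff] at hne
    have hgu : G.Reachable a u := aux_reach_mono (fun x y h => ((sdiff_adj _ _ _ _).mp h).1.reachable) hru
    refine Adj.reachable ?_
    rw [hAdj]
    refine Or.inl ⟨h1.1, ?_, ?_, ?_, ?_⟩
    · tauto
    · tauto
    · rintro ⟨rfl, rfl⟩; exact hac hgu
    · rintro ⟨rfl, rfl⟩; exact had hgu
  have hadj_ac : G₂.Adj a c := (hAdj a c).mpr (by tauto)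
  have hadj_bd : G₂.Adj b d := (hAdj b d).mpr (by tauto)
  have hreach_cd : G₂.Reachable c d :=
    (hadj_ac.symm.reachable).trans (hreach_ab.trans hadj_bd.reachable)
  have htrans : ∀ x y, G.Reachable x y → G₂.Reachable x y := by
    intro x y h
    refine aux_reach_mono ?_ h
    intro u v huv
    by_cases h1 : u = a ∧ v = b
    · obtain ⟨rfl, rfl⟩ := h1; exact hreach_ab
    by_cases h2 : u = b ∧ v = a
    · obtain ⟨rfl, rfl⟩ := h2; exact hreach_ab.symm
    by_cases h3 : u = c ∧ v = d
    · obtain ⟨rfl, rfl⟩ := h3; exact hreach_cd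
    by_cases h4 : u = d ∧ v = c
    · obtain ⟨rfl, rfl⟩ := h4; exact hreach_cd.symm
    · exact Adj.reachable ((hAdj u v).mpr (Or.inl ⟨huv, h1, h2, h3, h4⟩))
  refine ⟨G₂, ?_, htrans, hadj_ac.reachable⟩
  -- degree preservation
  have key : ∀ (x y z : Fin n), G.Adj x y → ¬ G.Adj x z → z ≠ y →
      G₂.neighborSet x = insert z (G.neighborSet x \ {y}) →
      (G₂.neighborSet x).ncard = (G.neighborSet x).ncard := by
    intro x y z hxy hxz hzy hset
    rw [hset, Set.ncard_insert_of_notMem (by simp [hxz, hzy] : z ∉ G.neighborSet x \ {y}),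
      Set.ncard_diff_singleton_of_mem (by exact hxy)]
    have : 0 < (G.neighborSet x).ncard := (Set.ncard_pos (Set.toFinite _)).mpr ⟨y, hxy⟩
    omega
  intro v
  by_cases hva : v = a
  · subst hva
    refine key v b c hab hnac hbc'.symm ?_
    ext y
    simp only [mem_neighborSet, hAdj, Set.mem_insert_iff, Set.mem_diff, Set.mem_singleton_iff]
    constructor
    · rintro (⟨h1, h2, h3, h4, h5⟩ | h | h | h | h) <;> tauto
    · rintro (rfl | ⟨h1, h2⟩)
      · tauto
      · exact Or.inl ⟨h1, by tauto, by tauto, by tauto, by tauto⟩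
  by_cases hvb : v = b
  · subst hvb
    refine key v a d (hab.symm) hnbd (Ne.symm had') ?_
    ext y
    simp only [mem_neighborSet, hAdj, Set.mem_insert_iff, Set.mem_diff, Set.mem_singleton_iff]
    constructor
    · rintro (⟨h1, h2, h3, h4, h5⟩ | h | h | h | h) <;> tauto
    · rintro (rfl | ⟨h1, h2⟩)
      · tauto
      · exact Or.inl ⟨h1, by tauto, by tauto, by tauto, by tauto⟩
  by_cases hvc : v = c
  · subst hvc
    refine key v d a hcd (fun h => hnac h.symm) had' ?_
    ext y
    simp only [mem_neighborSet, hAdj, Set.mem_insert_iff, Set.mem_diff, Set.mem_singleton_iff]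
    constructor
    · rintro (⟨h1, h2, h3, h4, h5⟩ | h | h | h | h) <;> tauto
    · rintro (rfl | ⟨h1, h2⟩)
      · tauto
      · exact Or.inl ⟨h1, by tauto, by tauto, by tauto, by tauto⟩
  by_cases hvd : v = d
  · subst hvd
    refine key v c b (hcd.symm) (fun h => hnbd h.symm) hbc' ?_
    ext y
    simp only [mem_neighborSet, hAdj, Set.mem_insert_iff, Set.mem_diff, Set.mem_singleton_iff]
    constructor
    · rintro (⟨h1, h2, h3, h4, h5⟩ | h | h | h | h) <;> tauto
    · rintro (rfl | ⟨h1, h2⟩)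
      · tauto
      · exact Or.inl ⟨h1, by tauto, by tauto, by tauto, by tauto⟩
  · have : G₂.neighborSet v = G.neighborSet v := by
      ext y
      simp only [mem_neighborSet, hAdj]
      constructor
      · rintro (⟨h1, _⟩ | h | h | h | h) <;> tauto
      · intro h
        exact Or.inl ⟨h, by tauto, by tauto, by tauto, by tauto⟩
    rw [this]

lemma aux_done_of_preconnected (n : ℕ) (hn : 1 ≤ n) (s : Fin n → ℕ)
    (G : SimpleGraph (Fin n)) (hdeg : ∀ i, (G.neighborSet i).ncard = s i)
    (hpre : ∀ x y : Fin n, G.Reachable x y) : ConnectedGraphic n s := by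
  classical
  haveI : Nonempty (Fin n) := ⟨⟨0, hn⟩⟩
  refine ⟨G, Classical.decRel _, ?_, fun i => ?_⟩
  · rw [connected_iff]
    exact ⟨hpre, inferInstance⟩
  · rw [aux_degree_eq_ncard, hdeg]

lemma aux_main (n : ℕ) (hn : 1 ≤ n) (s : Fin n → ℕ)
    (hpos : ∀ i, 0 < s i) (hsum : 2 * (n - 1) ≤ ∑ i, s i) :
    ∀ (k : ℕ) (G : SimpleGraph (Fin n)), (∀ i, (G.neighborSet i).ncard = s i) →
      {p : Fin n × Fin n | ¬ G.Reachable p.1 p.2}.ncard ≤ k → ConnectedGraphic n s := by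
  intro k
  induction k with
  | zero =>
    intro G hdeg hm
    refine aux_done_of_preconnected n hn s G hdeg ?_
    intro x y
    by_contra h
    have : 0 < {p : Fin n × Fin n | ¬ G.Reachable p.1 p.2}.ncard :=
      (Set.ncard_pos (Set.toFinite _)).mpr ⟨(x, y), h⟩
    omega
  | succ k ih =>
    intro G hdeg hm
    classical
    by_cases hconn : ∀ x y : Fin n, G.Reachable x y
    · exact aux_done_of_preconnected n hn s G hdeg hconn
    push_neg at hconn
    obtain ⟨u, v, huv⟩ := hconn
    haveI : DecidableRel G.Adj := Classical.decRel _
    -- number of edges is at least n - 1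
    have hsum2 : ∑ i, G.degree i = ∑ i, s i := by
      refine Finset.sum_congr rfl fun i _ => ?_
      rw [aux_degree_eq_ncard, hdeg]
    have hE : n - 1 ≤ G.edgeFinset.card := by
      have h2 := G.sum_degrees_eq_twice_card_edges
      omega
    -- find a non-bridge edge
    have hnonbridge : ∃ p : Fin n × Fin n, G.Adj p.1 p.2 ∧
        (G \ fromEdgeSet {s(p.1, p.2)}).Reachable p.1 p.2 := by
      by_contra hall
      push_neg at hall
      have hacy : G.IsAcyclic := by
        rw [isAcyclic_iff_forall_adj_isBridge]
        intro x y hxy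
        rw [isBridge_iff]
        exact hall (x, y) hxy
      have hb := aux_acyclic_card_bound (Nat.card G.edgeSet) G hacy rfl
      have hEcard : Nat.card G.edgeSet = G.edgeFinset.card := by
        rw [Nat.card_coe_set_eq, Set.ncard_eq_toFinset_card']
        congr 1
      have hcc : 2 ≤ Nat.card G.ConnectedComponent := by
        haveI : Finite G.ConnectedComponent := Quot.finite _
        have hne : G.connectedComponentMk u ≠ G.connectedComponentMk v :=
          fun h => huv (ConnectedComponent.exact h)
        haveI : Nontrivial G.ConnectedComponent := ⟨_, _, hne⟩
        haveI := Fintype.ofFinite G.ConnectedComponent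
        rw [Nat.card_eq_fintype_card]
        exact Fintype.one_lt_card_iff_nontrivial.mpr ‹_›
      rw [Fintype.card_fin] at hb
      omega
    obtain ⟨⟨a, b⟩, hab, hreach⟩ := hnonbridge
    -- pick a vertex in another component, with a neighbor
    obtain ⟨c, hac⟩ : ∃ c, ¬ G.Reachable a c := by
      by_cases h : G.Reachable a u
      · exact ⟨v, fun h2 => huv (h.symm.trans h2)⟩
      · exact ⟨u, h⟩
    obtain ⟨d, hcd⟩ : ∃ d, G.Adj c d := by
      have h0 : 0 < (G.neighborSet c).ncard := by rw [hdeg c]; exact hpos c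
      obtain ⟨d, hd⟩ := Set.nonempty_of_ncard_ne_zero (by omega :
        (G.neighborSet c).ncard ≠ 0)
      exact ⟨d, hd⟩
    obtain ⟨G₂, hdeg2, htrans, hreach2⟩ := aux_swap G a b c d hab hcd hac hreach
    refine ih G₂ (fun i => (hdeg2 i).trans (hdeg i)) ?_
    have hss : {p : Fin n × Fin n | ¬ G₂.Reachable p.1 p.2}
        ⊂ {p : Fin n × Fin n | ¬ G.Reachable p.1 p.2} := by
      have hsub : {p : Fin n × Fin n | ¬ G₂.Reachable p.1 p.2}
          ⊆ {p : Fin n × Fin n | ¬ G.Reachable p.1 p.2} := by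
        intro p hp hr
        exact hp (htrans _ _ hr)
      exact (Set.ssubset_iff_of_subset hsub).mpr ⟨(a, c), hac, fun h => h hreach2⟩
    have := Set.ncard_lt_ncard hss (Set.toFinite _)
    omega

theorem graphic_sum_ge_connected (n : ℕ) (hn : 1 ≤ n) (s : Fin n → ℕ)
    (hpos : ∀ i, 0 < s i) (hgraphic : Graphic n s)
    (hsum : 2 * (n - 1) ≤ ∑ i, s i) :
    ConnectedGraphic n s := by
  obtain ⟨G, inst, hdeg⟩ := hgraphic
  refine aux_main n hn s hpos hsum
    {p : Fin n × Fin n | ¬ G.Reachable p.1 p.2}.ncard G (fun i => ?_) le_rfl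
  rw [← hdeg i, aux_degree_eq_ncard]
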